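/- Let M = M_{n,k} = (m_{i,j}) be the cyclic (n,k)-matrix. Then any two columns of M represent the same cyclic sequence: for all 0 ≤ j, j' ≤ n−1 there exists an integer r such that m_{i,j} = m_{(i+r) mod n, j'} for every 0 ≤ i ≤ n−1. -/

import Mathlib

/-- Helper: shifting the remainder of `a` modulo `d` stays below `k` when `d ∣ k`. -/
lemma newa_lt {d k : ℕ} (hd : 0 < d) (hdk : d ∣ k) {a : ℕ} (ha : a < k) (b : ℕ) :
    a - a % d + b % d < k := by
  obtain ⟨u, hu⟩ := hdk
  have h2 : d * (a / d) + a % d = a := Nat.div_add_mod a d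
  have hlt : a / d < u := (Nat.div_lt_iff_lt_mul hd).mpr (by rw [mul_comm]; omega)
  have key : d * (a / d) + d ≤ d * u := by
    calc d * (a / d) + d = d * (a / d + 1) := by ring
    _ ≤ d * u := Nat.mul_le_mul_left _ hlt
  have hb : b % d < d := Nat.mod_lt _ hd
  generalize hX : d * (a / d) = X at h2 key
  generalize hY : d * u = Y at key hu
  omega

/-- Core lemma: existence of a shift `r` making the two congruence conditions equivalent. -/
lemma core (n k : ℕ) (hn : 0 < n) (j j' : ℕ) :
    ∃ r : ℕ, ∀ i : ℕ,
      ((∃ a < k, j ≡ i * k + a [MOD n]) ↔ (∃ a < k, j' ≡ (i + r) * k + a [MOD n])) := by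
  rcases Nat.eq_zero_or_pos k with hk0 | hk0
  · refine ⟨0, fun i => ?_⟩
    constructor <;> rintro ⟨a, ha, -⟩ <;> omega
  set d := Nat.gcd k n with hdd
  have hd0 : 0 < d := Nat.gcd_pos_of_pos_right _ hn
  have hdk : d ∣ k := Nat.gcd_dvd_left _ _
  have hdn : d ∣ n := Nat.gcd_dvd_right _ _
  have hjd : (j : ℤ) = d * (j / d : ℕ) + ((j % d : ℕ) : ℤ) := by
    exact_mod_cast (Nat.div_add_mod j d).symm
  have hjd' : (j' : ℤ) = d * (j' / d : ℕ) + ((j' % d : ℕ) : ℤ) := by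
    exact_mod_cast (Nat.div_add_mod j' d).symm
  obtain ⟨e, he⟩ : (d : ℤ) ∣ ((j' : ℤ) - (j : ℤ) - (((j' % d : ℕ) : ℤ) - ((j % d : ℕ) : ℤ))) :=
    ⟨((j' / d : ℕ) : ℤ) - ((j / d : ℕ) : ℤ), by linear_combination hjd' - hjd⟩
  have hbez : (d : ℤ) = (k : ℤ) * Int.gcdA k n + (n : ℤ) * Int.gcdB k n := by
    have := Int.gcd_eq_gcd_ab (k : ℤ) (n : ℤ)
    rwa [Int.gcd_natCast_natCast] at this
  set R : ℤ := Int.gcdA k n * e with hR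
  obtain ⟨q, hq⟩ : (n : ℤ) ∣ ((j' : ℤ) - (j : ℤ) - (((j' % d : ℕ) : ℤ) - ((j % d : ℕ) : ℤ))
      - R * k) := ⟨e * Int.gcdB k n, by rw [hR]; linear_combination he + e * hbez⟩
  set r : ℕ := (R % n).toNat with hr
  have hnz : (n : ℤ) ≠ 0 := by exact_mod_cast hn.ne'
  have hrval : (r : ℤ) = R % n := Int.toNat_of_nonneg (Int.emod_nonneg _ hnz)
  obtain ⟨s, hs⟩ : (n : ℤ) ∣ R - r := by
    rw [hrval]
    exact ⟨R / n, by have := Int.mul_ediv_add_emod R n; linarith⟩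
  refine ⟨r, fun i => ?_⟩
  constructor
  · rintro ⟨a, ha, hme⟩
    have hmod : j % d = a % d := by
      have h1 : j ≡ i * k + a [MOD d] := hme.of_dvd hdn
      have h2 : i * k + a ≡ 0 + a [MOD d] :=
        Nat.ModEq.add_right a ((Nat.modEq_zero_iff_dvd).mpr (hdk.mul_left i))
      exact (by simpa using h1.trans h2 : j ≡ a [MOD d])
    have hmodZ : (j : ℤ) % d = (a : ℤ) % d := by exact_mod_cast congrArg (Nat.cast (R := ℤ)) hmod
    refine ⟨a - a % d + j' % d, newa_lt hd0 hdk ha _, ?_⟩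
    obtain ⟨p, hp⟩ := (Nat.modEq_iff_dvd.mp hme)
    rw [Nat.modEq_iff_dvd]
    refine ⟨p - q - s * k, ?_⟩
    have hale : a % d ≤ a := Nat.mod_le a d
    push_cast [hale] at hq hp ⊢
    linear_combination hp - hq - (k : ℤ) * hs + hmodZ
  · rintro ⟨a, ha, hme⟩
    have hmod : j' % d = a % d := by
      have h1 : j' ≡ (i + r) * k + a [MOD d] := hme.of_dvd hdn
      have h2 : (i + r) * k + a ≡ 0 + a [MOD d] :=
        Nat.ModEq.add_right a ((Nat.modEq_zero_iff_dvd).mpr (hdk.mul_left _))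
      exact (by simpa using h1.trans h2 : j' ≡ a [MOD d])
    have hmodZ : (j' : ℤ) % d = (a : ℤ) % d := by
      exact_mod_cast congrArg (Nat.cast (R := ℤ)) hmod
    refine ⟨a - a % d + j % d, newa_lt hd0 hdk ha _, ?_⟩
    obtain ⟨p, hp⟩ := (Nat.modEq_iff_dvd.mp hme)
    rw [Nat.modEq_iff_dvd]
    refine ⟨p + q + s * k, ?_⟩
    have hale : a % d ≤ a := Nat.mod_le a d
    push_cast [hale] at hq hp ⊢
    linear_combination hp + hq + (k : ℤ) * hs + hmodZ

open scoped Classical in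
/-- The cyclic `(n,k)`-matrix: the `(i,j)` entry equals `1` iff
`j ≡ ik + a (mod n)` for some `0 ≤ a ≤ k − 1`. -/
noncomputable def cyc (n k : ℕ) : Fin n → Fin n → ℕ := fun i j =>
  if ∃ a < k, (j : ℕ) ≡ (i : ℕ) * k + a [MOD n] then 1 else 0

/-- any two columns of the cyclic `(n,k)`-matrix represent the same
cyclic sequence: for columns `j, j'` there is a shift `r` with
`m_{i,j} = m_{(i+r) mod n, j'}` for every `i`. -/
theorem stmt_18 (n k : ℕ) (hn : 1 ≤ n) (hk : k ≤ n) (j j' : Fin n) :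
    ∃ r : ℕ, ∀ i : Fin n,
      cyc n k i j = cyc n k ⟨((i : ℕ) + r) % n, Nat.mod_lt _ (by omega)⟩ j' := by
  obtain ⟨r, hr⟩ := core n k (by omega) j j'
  refine ⟨r, fun i => ?_⟩
  simp only [cyc]
  refine if_congr ?_ rfl rfl
  rw [hr i]
  refine exists_congr fun a => and_congr_right fun _ => ⟨fun h => ?_, fun h => ?_⟩
  · exact h.trans (Nat.ModEq.add_right a (((Nat.mod_modEq (i + r) n).symm).mul_right k))
  · exact h.trans (Nat.ModEq.add_right a ((Nat.mod_modEq (i + r) n).mul_right k))
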